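/- Let s ≥ 1, n ≥ 2s, γ ∈ ℝ. Let θ⁺ ∈ ℂ^s have nonzero pairwise-distinct entries with (θ⁺_k)^n ≠ e^{−iγ} for all k, and let z = (z_0,…,z_{2s−1}) ∈ ℂ^{2s} be pairwise distinct with z_j^n = e^{iγ} for all j. Then the 2s × s matrix V_n(z)^T V_n(θ⁺) has trivial kernel; consequently, for any g⁺ ∈ ℂ^s, the unique g ∈ ℂ^s satisfying V_n(z)^T V_n(θ⁺) g = V_n(z)^T V_n(θ⁺) g⁺ is g = g⁺. -/

import Mathlib

open Matrix Complex Polynomial Finset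

/-- The `n × k` Vandermonde matrix with `(j,l)` entry `w_l^j`. -/
noncomputable def vand (n k : ℕ) (w : Fin k → ℂ) : Matrix (Fin n) (Fin k) ℂ :=
  Matrix.of fun j l => w l ^ (j : ℕ)

/-- with `2s` pairwise distinct shifted-harmonic samples and `θ⁺` with nonzero
pairwise distinct entries satisfying `(θ⁺_k)^n ≠ e^{−iγ}`, the `2s × s` matrix
`V_n(z)^T V_n(θ⁺)` has trivial kernel; hence `g` is uniquely determined by the measurements. -/
theorem vandermonde_product_trivial_kernel (s n : ℕ) (hs : 1 ≤ s) (hn : 2 * s ≤ n) (γ : ℝ)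
    (θp : Fin s → ℂ) (hθ0 : ∀ l, θp l ≠ 0) (hθinj : Function.Injective θp)
    (hθn : ∀ k, θp k ^ n ≠ Complex.exp (-(γ : ℂ) * Complex.I))
    (z : Fin (2 * s) → ℂ) (hzinj : Function.Injective z)
    (hzn : ∀ j, z j ^ n = Complex.exp ((γ : ℂ) * Complex.I)) :
    (∀ g : Fin s → ℂ,
        ((vand n (2 * s) z).transpose * vand n s θp).mulVec g = 0 → g = 0) ∧
    (∀ gp g : Fin s → ℂ,
        ((vand n (2 * s) z).transpose * vand n s θp).mulVec g =
          ((vand n (2 * s) z).transpose * vand n s θp).mulVec gp → g = gp) := by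
  classical
  have hexp : Complex.exp (-(γ : ℂ) * Complex.I) * Complex.exp ((γ : ℂ) * Complex.I) = 1 := by
    rw [← Complex.exp_add]; ring_nf; exact Complex.exp_zero
  have hne1 : ∀ (j : Fin (2 * s)) (l : Fin s), z j * θp l ≠ 1 := by
    intro j l h
    apply hθn l
    have h2 : Complex.exp ((γ : ℂ) * Complex.I) * θp l ^ n = 1 := by
      rw [← hzn j, ← mul_pow, h, one_pow]
    have h3 : Complex.exp ((γ : ℂ) * Complex.I) * θp l ^ n
        = Complex.exp ((γ : ℂ) * Complex.I) * Complex.exp (-(γ : ℂ) * Complex.I) := by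
      rw [h2, mul_comm, hexp]
    exact mul_left_cancel₀ (Complex.exp_ne_zero _) h3
  set c : Fin s → ℂ := fun l => Complex.exp ((γ : ℂ) * Complex.I) * θp l ^ n - 1 with hc
  have hcne : ∀ l, c l ≠ 0 := by
    intro l h
    apply hθn l
    have h2 : Complex.exp ((γ : ℂ) * Complex.I) * θp l ^ n = 1 := by
      have := sub_eq_zero.mp h; simpa using this
    have h3 : Complex.exp ((γ : ℂ) * Complex.I) * θp l ^ n
        = Complex.exp ((γ : ℂ) * Complex.I) * Complex.exp (-(γ : ℂ) * Complex.I) := by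
      rw [h2, mul_comm, hexp]
    exact mul_left_cancel₀ (Complex.exp_ne_zero _) h3
  -- entry formula
  have hentry : ∀ (j : Fin (2 * s)) (l : Fin s),
      ((vand n (2 * s) z).transpose * vand n s θp) j l = c l / (z j * θp l - 1) := by
    intro j l
    have hx : z j * θp l ≠ 1 := hne1 j l
    have : ((vand n (2 * s) z).transpose * vand n s θp) j l
        = ∑ m ∈ Finset.range n, (z j * θp l) ^ m := by
      rw [Matrix.mul_apply]
      rw [← Fin.sum_univ_eq_sum_range (fun m => (z j * θp l) ^ m) n]
      apply Finset.sum_congr rfl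
      intro m _
      simp [vand, Matrix.transpose_apply, mul_pow]
    rw [this, geom_sum_eq hx, mul_pow, hzn j]
  -- first part
  have key : ∀ g : Fin s → ℂ,
      ((vand n (2 * s) z).transpose * vand n s θp).mulVec g = 0 → g = 0 := by
    intro g hg
    set P : Polynomial ℂ :=
      ∑ l : Fin s, C (g l * c l) * ∏ m ∈ Finset.univ.erase l, (C (θp m) * X - 1) with hP
    have hdeg1 : ∀ m : Fin s, (C (θp m) * X - 1 : Polynomial ℂ).natDegree ≤ 1 := by
      intro m
      refine (natDegree_sub_le _ _).trans (max_le ?_ ?_)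
      · exact (natDegree_C_mul_le _ _).trans (by simp)
      · simp
    have hPdeg : P.natDegree ≤ s - 1 := by
      refine natDegree_sum_le_of_forall_le _ _ ?_
      intro l _
      refine (natDegree_C_mul_le _ _).trans ?_
      refine (natDegree_prod_le _ _).trans ?_
      calc ∑ m ∈ Finset.univ.erase l, (C (θp m) * X - 1 : Polynomial ℂ).natDegree
          ≤ ∑ m ∈ Finset.univ.erase l, 1 := Finset.sum_le_sum fun m _ => hdeg1 m
        _ = s - 1 := by simp [Finset.card_erase_of_mem]
    have heval : ∀ j : Fin (2 * s), P.eval (z j) = 0 := by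
      intro j
      have hj := congrFun hg j
      simp only [Matrix.mulVec, dotProduct, Pi.zero_apply] at hj
      have hj' : ∑ l, c l / (z j * θp l - 1) * g l = 0 := by
        rw [← hj]; exact Finset.sum_congr rfl fun l _ => by rw [hentry j l]
      have : P.eval (z j)
          = (∑ l, c l / (z j * θp l - 1) * g l) * ∏ m, (θp m * z j - 1) := by
        rw [hP, eval_finset_sum, Finset.sum_mul]
        apply Finset.sum_congr rfl
        intro l _
        have hmem : l ∈ (Finset.univ : Finset (Fin s)) := Finset.mem_univ l
        have hprod : ∏ m, (θp m * z j - 1)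
            = (θp l * z j - 1) * ∏ m ∈ Finset.univ.erase l, (θp m * z j - 1) :=
          (Finset.mul_prod_erase _ _ hmem).symm
        have hd : z j * θp l - 1 ≠ 0 := sub_ne_zero.mpr (hne1 j l)
        rw [hprod]
        simp only [eval_mul, eval_C, eval_prod, eval_sub, eval_one, eval_X]
        field_simp
        ring_nf
        congr 1
        exact Finset.prod_congr rfl fun x _ => by ring
      rw [this, hj', zero_mul]
    have hPzero : P = 0 := by
      refine Polynomial.eq_zero_of_natDegree_lt_card_of_eval_eq_zero P hzinj heval ?_
      refine lt_of_le_of_lt hPdeg ?_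
      simp only [Fintype.card_fin]
      omega
    funext l
    have hev : P.eval (θp l)⁻¹ = 0 := by rw [hPzero]; simp
    have hev2 : P.eval (θp l)⁻¹
        = g l * c l * ∏ m ∈ Finset.univ.erase l, (θp m * (θp l)⁻¹ - 1) := by
      rw [hP, eval_finset_sum]
      rw [Finset.sum_eq_single l]
      · simp [eval_prod]
      · intro l' _ hll
        have : l ∈ Finset.univ.erase l' := Finset.mem_erase.mpr ⟨fun h => hll h.symm, Finset.mem_univ l⟩
        simp only [eval_mul, eval_C, eval_prod, eval_sub, eval_one, eval_X]
        rw [Finset.prod_eq_zero this (sub_eq_zero.mpr (mul_inv_cancel₀ (hθ0 l)))]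
        ring
      · simp
    have hprodne : ∏ m ∈ Finset.univ.erase l, (θp m * (θp l)⁻¹ - 1) ≠ 0 := by
      refine Finset.prod_ne_zero_iff.mpr fun m hm => ?_
      have hml : m ≠ l := (Finset.mem_erase.mp hm).1
      intro h
      have : θp m * (θp l)⁻¹ = 1 := by linear_combination h
      exact hml (hθinj ((mul_inv_eq_one₀ (hθ0 l)).mp this))
    have := hev2.symm.trans hev
    rcases mul_eq_zero.mp this with h | h
    · rcases mul_eq_zero.mp h with h' | h'
      · simpa using h'
      · exact absurd h' (hcne l)
    · exact absurd h hprodne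
  refine ⟨key, fun gp g hg => ?_⟩
  have : ((vand n (2 * s) z).transpose * vand n s θp).mulVec (g - gp) = 0 := by
    rw [Matrix.mulVec_sub, hg, sub_self]
  have := key _ this
  funext l
  have := congrFun this l
  simpa [sub_eq_zero] using this
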